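/- A priori bound on initial mass from the relative entropy: let h₀ be a nonnegative finite Borel measure on 𝕋³, h₀* ∈ C(𝕋³) with h₀* > 0, and suppose the relative entropy Λ₀ := Λ(h₀, Ũ₀) is finite, where Ũ₀ includes the component L - h₀/h₀* (L the Lebesgue measure) so that in particular ‖L - h₀/h₀*‖²_{TV} ≤ 2Λ₀ ∫ h₀. Then the total mass satisfies ∫_{𝕋³} h₀ ≤ 2(‖h₀*‖²_∞ Λ₀ + ∫_{𝕋³} h₀*). -/

import Mathlib

open MeasureTheory
noncomputable section

/-- The 3-torus `𝕋³ = ℝ³/ℤ³` (with its normalized Haar/Lebesgue measure `L`,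
`L(𝕋³) = 1`). -/
abbrev T3 : Type := UnitAddCircle × UnitAddCircle × UnitAddCircle

/-- Total variation `‖μ - ν‖_TV` of the difference of two (finite) nonnegative
measures, via the Jordan decomposition `|μ-ν| = (μ-ν)⁺ + (μ-ν)⁻`. -/
def TVdiff (μ ν : Measure T3) : ℝ := ((μ - ν) Set.univ).toReal + ((ν - μ) Set.univ).toReal

/-- a priori bound on the initial mass from the relative entropy.
Let `h₀` be a nonnegative finite Borel measure on `𝕋³`, `h₀* ∈ C(𝕋³)` with
`h₀* > 0`, and suppose the (finite, nonnegative) relative entropy `Λ₀` satisfies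
`‖L - h₀/h₀*‖²_TV ≤ 2Λ₀ ∫h₀` (Cauchy–Schwarz for the entropy functional), where
`h₀/h₀*` is the measure with density `(h₀*)⁻¹` with respect to `h₀`.  Then
`∫_{𝕋³} h₀ ≤ 2(‖h₀*‖²_∞ Λ₀ + ∫_{𝕋³} h₀*)`. -/
theorem mass_bound_from_relative_entropy (h0 : Measure T3) [IsFiniteMeasure h0]
    (hstar : C(T3, ℝ)) (hpos : ∀ x, 0 < hstar x)
    (Λ0 : ℝ) (hΛ0 : 0 ≤ Λ0)
    (hTV : (TVdiff (volume : Measure T3)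
        (h0.withDensity fun x => ENNReal.ofReal (hstar x)⁻¹))^2
      ≤ 2 * Λ0 * (h0 Set.univ).toReal) :
    (h0 Set.univ).toReal ≤ 2 * (‖hstar‖^2 * Λ0 + ∫ x, hstar x) := by
  set f : T3 → ENNReal := fun x => ENNReal.ofReal (hstar x)⁻¹ with hf_def
  set ν : Measure T3 := h0.withDensity f with hν_def
  set g : T3 → ENNReal := fun x => ENNReal.ofReal (hstar x) with hg_def
  have hf : Measurable f := ENNReal.measurable_ofReal.comp
    (hstar.continuous.measurable.inv)
  have hg : Measurable g := ENNReal.measurable_ofReal.comp hstar.continuous.measurable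
  -- ν is a finite measure
  obtain ⟨x0, -, hx0⟩ := isCompact_univ.exists_isMinOn (Set.univ_nonempty)
    hstar.continuous.continuousOn
  have hνfin : IsFiniteMeasure ν := by
    constructor
    have : ν Set.univ = ∫⁻ x, f x ∂h0 := by
      rw [hν_def, withDensity_apply _ MeasurableSet.univ, Measure.restrict_univ]
    rw [this]
    calc ∫⁻ x, f x ∂h0 ≤ ∫⁻ _, ENNReal.ofReal (hstar x0)⁻¹ ∂h0 := by
          refine lintegral_mono fun x => ?_
          exact ENNReal.ofReal_le_ofReal
            (inv_anti₀ (hpos x0) (hx0 (Set.mem_univ x)))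
      _ = ENNReal.ofReal (hstar x0)⁻¹ * h0 Set.univ := lintegral_const _
      _ < ⊤ := ENNReal.mul_lt_top ENNReal.ofReal_lt_top (measure_lt_top h0 _)
  -- mass identity : ∫⁻ g dν = h0 univ
  have hmass : ∫⁻ x, g x ∂ν = h0 Set.univ := by
    rw [hν_def, lintegral_withDensity_eq_lintegral_mul h0 hf hg]
    have : (fun x => (f * g) x) = fun _ => (1 : ENNReal) := by
      funext x
      simp only [Pi.mul_apply, hf_def, hg_def]
      rw [← ENNReal.ofReal_mul (inv_nonneg.mpr (hpos x).le), inv_mul_cancel₀ (hpos x).ne',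
        ENNReal.ofReal_one]
    rw [this, lintegral_one]
  -- Hahn decomposition for ν vs volume
  obtain ⟨s, hs, hsc, hsL⟩ := hahn_decomposition (μ := ν) (ν := (volume : Measure T3))
  -- on sᶜ : ν ≤ volume
  have hcompl : ν.restrict sᶜ ≤ (volume : Measure T3).restrict sᶜ := by
    refine Measure.le_iff.mpr fun t ht => ?_
    rw [Measure.restrict_apply ht, Measure.restrict_apply ht]
    exact hsL _ (ht.inter hs.compl) Set.inter_subset_right
  -- on s : volume ≤ ν, so ν.restrict s ≤ volume.restrict s + (ν - (volume : Measure T3)).restrict s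
  have hvol_le : (volume : Measure T3).restrict s ≤ ν.restrict s := by
    refine Measure.le_iff.mpr fun t ht => ?_
    rw [Measure.restrict_apply ht, Measure.restrict_apply ht]
    exact hsc _ (ht.inter hs) Set.inter_subset_right
  have hres : ν.restrict s ≤ (volume : Measure T3).restrict s + (ν - (volume : Measure T3)).restrict s := by
    refine Measure.le_iff.mpr fun t ht => ?_
    rw [Measure.add_apply, Measure.restrict_sub_eq_restrict_sub_restrict hs,
      Measure.sub_apply ht hvol_le]
    exact le_add_tsub
  -- pointwise bound : g ≤ ‖hstar‖
  have hgbd : ∀ x, g x ≤ ENNReal.ofReal ‖hstar‖ := fun x =>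
    ENNReal.ofReal_le_ofReal ((le_abs_self _).trans (hstar.norm_coe_le_norm x))
  -- main lintegral estimate
  have hmain : ∫⁻ x, g x ∂ν
      ≤ ∫⁻ x, g x ∂(volume : Measure T3)
        + ENNReal.ofReal ‖hstar‖ * (ν - (volume : Measure T3)) Set.univ := by
    have h1 : ∫⁻ x, g x ∂ν = ∫⁻ x, g x ∂(ν.restrict s) + ∫⁻ x, g x ∂(ν.restrict sᶜ) := by
      rw [← lintegral_add_compl g hs]
    have h2 : ∫⁻ x, g x ∂(ν.restrict s)
        ≤ ∫⁻ x, g x ∂((volume : Measure T3).restrict s)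
          + ∫⁻ x, g x ∂((ν - (volume : Measure T3)).restrict s) := by
      calc ∫⁻ x, g x ∂(ν.restrict s)
          ≤ ∫⁻ x, g x ∂((volume : Measure T3).restrict s + (ν - (volume : Measure T3)).restrict s) :=
            lintegral_mono' hres le_rfl
        _ = _ := lintegral_add_measure _ _ _
    have h3 : ∫⁻ x, g x ∂((ν - (volume : Measure T3)).restrict s)
        ≤ ENNReal.ofReal ‖hstar‖ * (ν - (volume : Measure T3)) Set.univ := by
      calc ∫⁻ x, g x ∂((ν - (volume : Measure T3)).restrict s)
          ≤ ∫⁻ _, ENNReal.ofReal ‖hstar‖ ∂((ν - (volume : Measure T3)).restrict s) :=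
            lintegral_mono fun x => hgbd x
        _ = ENNReal.ofReal ‖hstar‖ * (ν - (volume : Measure T3)) s := by
            rw [lintegral_const, Measure.restrict_apply_univ]
        _ ≤ _ := mul_le_mul_right (measure_mono (Set.subset_univ s)) _
    have h4 : ∫⁻ x, g x ∂(ν.restrict sᶜ)
        ≤ ∫⁻ x, g x ∂((volume : Measure T3).restrict sᶜ) :=
      lintegral_mono' hcompl le_rfl
    have h5 : ∫⁻ x, g x ∂((volume : Measure T3).restrict s)
        + ∫⁻ x, g x ∂((volume : Measure T3).restrict sᶜ)
        = ∫⁻ x, g x ∂(volume : Measure T3) := lintegral_add_compl g hs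
    have h2' : ∫⁻ x, g x ∂(ν.restrict s)
        ≤ ∫⁻ x, g x ∂((volume : Measure T3).restrict s)
          + ENNReal.ofReal ‖hstar‖ * (ν - (volume : Measure T3)) Set.univ :=
      h2.trans (add_le_add_right h3 _)
    calc ∫⁻ x, g x ∂ν
        = ∫⁻ x, g x ∂(ν.restrict s) + ∫⁻ x, g x ∂(ν.restrict sᶜ) := h1
      _ ≤ (∫⁻ x, g x ∂((volume : Measure T3).restrict s)
            + ENNReal.ofReal ‖hstar‖ * (ν - (volume : Measure T3)) Set.univ)
          + ∫⁻ x, g x ∂((volume : Measure T3).restrict sᶜ) := add_le_add h2' h4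
      _ = _ := by rw [add_right_comm, h5]
  -- ∫⁻ g dvolume = ofReal (∫ hstar)
  have hint : Integrable (fun x => hstar x) (volume : Measure T3) := by
    refine (integrable_const ‖hstar‖).mono' hstar.continuous.aestronglyMeasurable ?_
    exact Filter.Eventually.of_forall fun x => hstar.norm_coe_le_norm x
  have hL : ∫⁻ x, g x ∂(volume : Measure T3) = ENNReal.ofReal (∫ x, hstar x) :=
    (ofReal_integral_eq_lintegral_ofReal hint
      (Filter.Eventually.of_forall fun x => (hpos x).le)).symm
  -- pass to real numbers
  have hsubfin : (ν - (volume : Measure T3)) Set.univ ≠ ⊤ :=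
    (lt_of_le_of_lt (Measure.le_iff'.mp (Measure.sub_le (μ := ν) (ν := (volume : Measure T3))) Set.univ) (hνfin.measure_univ_lt_top)).ne
  have hreal : (h0 Set.univ).toReal
      ≤ (∫ x, hstar x) + ‖hstar‖ * ((ν - (volume : Measure T3)) Set.univ).toReal := by
    have := hmain
    rw [hmass, hL] at this
    have h6 := ENNReal.toReal_mono ?_ this
    · rw [ENNReal.toReal_add ENNReal.ofReal_ne_top
        (ENNReal.mul_ne_top ENNReal.ofReal_ne_top hsubfin),
        ENNReal.toReal_mul, ENNReal.toReal_ofReal (integral_nonneg fun x => (hpos x).le),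
        ENNReal.toReal_ofReal (norm_nonneg _)] at h6
      exact h6
    · exact ENNReal.add_ne_top.mpr ⟨ENNReal.ofReal_ne_top,
        ENNReal.mul_ne_top ENNReal.ofReal_ne_top hsubfin⟩
  -- final arithmetic
  set m := (h0 Set.univ).toReal with hm_def
  set T := TVdiff (volume : Measure T3) ν with hT_def
  have hT1 : ((ν - (volume : Measure T3)) Set.univ).toReal ≤ T := by
    rw [hT_def, TVdiff]
    have : (0:ℝ) ≤ (((volume : Measure T3) - ν) Set.univ).toReal := ENNReal.toReal_nonneg
    linarith
  have hTnn : 0 ≤ T := by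
    rw [hT_def, TVdiff]; positivity
  have hmnn : (0:ℝ) ≤ m := ENNReal.toReal_nonneg
  have hInn : (0:ℝ) ≤ ∫ x, hstar x := integral_nonneg fun x => (hpos x).le
  have hHnn : (0:ℝ) ≤ ‖hstar‖ := norm_nonneg _
  have hm2 : m ≤ (∫ x, hstar x) + ‖hstar‖ * T := by
    have := mul_le_mul_of_nonneg_left hT1 hHnn
    linarith
  have hTsq : T^2 ≤ 2 * Λ0 * m := hTV
  nlinarith [sq_nonneg (‖hstar‖ * T - 2 * ‖hstar‖^2 * Λ0 - (∫ x, hstar x)),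
    sq_nonneg (T - ‖hstar‖ * Λ0), mul_nonneg hHnn hTnn,
    mul_nonneg (mul_nonneg hHnn hHnn) hΛ0, sq_nonneg T,
    mul_le_mul_of_nonneg_left hTsq (mul_nonneg hHnn hHnn),
    sq_nonneg (‖hstar‖ * T - 2 * ‖hstar‖^2 * Λ0)]
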